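/- For any s, k ∈ ℕ there exists r ∈ ℕ with the following property: for every abelian group G, every IP_r set A ⊆ G, and every coloring c : A → {1,…,k}, there exist x_1,…,x_s ∈ G such that FS(x_1,…,x_s) ⊆ A and c is constant on FS(x_1,…,x_s); that is, every k-coloring of an IP_r set yields a monochromatic IP_s set. -/

import Mathlib

open Set

/-- Finite sums set `FS(x₁,…,x_r)`. -/
def FSfin {G : Type*} [AddCommMonoid G] {r : ℕ} (x : Fin r → G) : Set G :=
  {g | ∃ α : Finset (Fin r), α.Nonempty ∧ ∑ i ∈ α, x i = g}

/-- `A` is an IP_r set: it contains `FS(x₁,…,x_r)` for some `x₁,…,x_r`. -/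
def IsIPr {G : Type*} [AddCommMonoid G] (r : ℕ) (A : Set G) : Prop :=
  ∃ x : Fin r → G, FSfin x ⊆ A

/-- `A` is an IP*_r set: it meets every IP_r set. -/
def IsIPrStar {G : Type*} [AddCommMonoid G] (r : ℕ) (A : Set G) : Prop :=
  ∀ B : Set G, IsIPr r B → (A ∩ B).Nonempty

section Aux

open Finset in
/-- Indicator element of `ℕ →₀ ℤ` of a finite set. -/
noncomputable def IndFS (S : Finset ℕ) : ℕ →₀ ℤ := ∑ t ∈ S, Finsupp.single t 1

lemma indFS_apply (S : Finset ℕ) (t : ℕ) : IndFS S t = if t ∈ S then 1 else 0 := by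
  classical
  rw [IndFS, Finsupp.finset_sum_apply]
  simp [Finsupp.single_apply]

lemma indFS_support (S : Finset ℕ) : (IndFS S).support = S := by
  ext t
  rcases em (t ∈ S) with h | h <;>
    simp [Finsupp.mem_support_iff, indFS_apply, h]

/-- Every element of `Hindman.FS b` is a finite sum of distinct terms of `b`. -/
lemma fs_sum_form {M : Type*} [AddCommMonoid M] {b : Stream' M} {m : M}
    (h : m ∈ Hindman.FS b) : ∃ S : Finset ℕ, S.Nonempty ∧ m = ∑ i ∈ S, b.get i := by
  induction h with
  | head' a =>
      refine ⟨{0}, ⟨0, Finset.mem_singleton_self 0⟩, ?_⟩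
      rw [Finset.sum_singleton]
  | tail' a m h ih =>
      obtain ⟨S, hS, rfl⟩ := ih
      refine ⟨S.map ⟨Nat.succ, Nat.succ_injective⟩, hS.map, ?_⟩
      rw [Finset.sum_map]
      exact Finset.sum_congr rfl fun i _ => Stream'.get_tail
  | cons' a m h ih =>
      obtain ⟨S, hS, rfl⟩ := ih
      refine ⟨insert 0 (S.map ⟨Nat.succ, Nat.succ_injective⟩),
        Finset.insert_nonempty _ _, ?_⟩
      rw [Finset.sum_insert (by simp), Finset.sum_map]
      congr 1

/-- The key combinatorial property of `r` (a finitary finite-unions theorem). -/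
def GoodR (s k r : ℕ) : Prop :=
  ∀ κ : Finset ℕ → Fin k, ∃ β : Fin s → Finset ℕ,
    (∀ i, (β i).Nonempty) ∧ (∀ i, ∀ t ∈ β i, t < r) ∧
    (∀ i i', i ≠ i' → Disjoint (β i) (β i')) ∧
    ∃ j : Fin k, ∀ I : Finset (Fin s), I.Nonempty → κ (I.biUnion β) = j

lemma exists_goodR (s k : ℕ) (hk : 0 < k) : ∃ r : ℕ, GoodR s k r := by
  classical
  by_contra hcon
  push_neg at hcon
  have hcon' : ∀ r : ℕ, ∃ κ : Finset ℕ → Fin k, ¬ (∃ β : Fin s → Finset ℕ,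
      (∀ i, (β i).Nonempty) ∧ (∀ i, ∀ t ∈ β i, t < r) ∧
      (∀ i i', i ≠ i' → Disjoint (β i) (β i')) ∧
      ∃ j : Fin k, ∀ I : Finset (Fin s), I.Nonempty → κ (I.biUnion β) = j) := by
    intro r
    have := hcon r
    rw [GoodR] at this
    push_neg at this
    obtain ⟨κ, hκ⟩ := this
    refine ⟨κ, ?_⟩
    rintro ⟨β, h1, h2, h3, j, h4⟩
    obtain ⟨I, hI, hne⟩ := hκ β h1 h2 h3 j
    exact hne (h4 I hI)
  choose κbad hbad using hcon'
  haveI : NeZero k := ⟨hk.ne'⟩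
  -- the ultrafilter limit coloring
  have hlim : ∀ S : Finset ℕ, ∃ j : Fin k,
      {r | κbad r S = j} ∈ Filter.hyperfilter ℕ := by
    intro S
    by_contra h
    push_neg at h
    have h1 : ∀ j : Fin k, {r | κbad r S = j}ᶜ ∈ Filter.hyperfilter ℕ := fun j =>
      (Ultrafilter.compl_mem_iff_notMem).mpr (h j)
    have h2 : (⋂ j : Fin k, {r | κbad r S = j}ᶜ) ∈ Filter.hyperfilter ℕ :=
      Filter.iInter_mem.mpr h1
    obtain ⟨r, hr⟩ := Ultrafilter.nonempty_of_mem h2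
    simp only [Set.mem_iInter, Set.mem_compl_iff, Set.mem_setOf_eq] at hr
    exact hr (κbad r S) rfl
  choose κ hκ using hlim
  -- apply the infinitary Hindman theorem in ℕ →₀ ℤ
  set a : Stream' (ℕ →₀ ℤ) := fun n => Finsupp.single n 1 with ha
  have hget : ∀ n, a.get n = Finsupp.single n 1 := fun _ => rfl
  have hFSa : ∀ m ∈ Hindman.FS a, ∃ S : Finset ℕ, S.Nonempty ∧ m = IndFS S := by
    intro m hm
    obtain ⟨S, hS, rfl⟩ := fs_sum_form hm
    exact ⟨S, hS, by simp [IndFS, hget]⟩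
  set C : Fin k → Set (ℕ →₀ ℤ) :=
    fun j => {m | m ∈ Hindman.FS a ∧ κ m.support = j} with hC
  have scov : Hindman.FS a ⊆ ⋃₀ Set.range C := by
    intro m hm
    exact ⟨C (κ m.support), ⟨_, rfl⟩, hm, rfl⟩
  obtain ⟨c, ⟨j, rfl⟩, b, hb⟩ :=
    Hindman.FS_partition_regular a (Set.range C) (Set.finite_range C) scov
  -- extract the sets
  set β : Fin s → Finset ℕ := fun i => (b.get (i : ℕ)).support with hβdef
  have hgetb : ∀ i : Fin s, b.get (i : ℕ) = IndFS (β i) ∧ (β i).Nonempty := by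
    intro i
    have h1 : b.get (i : ℕ) ∈ C j := hb (Hindman.FS.singleton b (i : ℕ))
    obtain ⟨S, hS, hSe⟩ := hFSa _ h1.1
    have hsupp : β i = S := by rw [hβdef]; simp only; rw [hSe, indFS_support]
    exact ⟨by rw [hsupp, ← hSe], hsupp ▸ hS⟩
  have hdisj : ∀ i i' : Fin s, i ≠ i' → Disjoint (β i) (β i') := by
    have key : ∀ i i' : Fin s, (i : ℕ) < (i' : ℕ) → Disjoint (β i) (β i') := by
      intro i i' hlt
      rw [Finset.disjoint_left]
      intro t hti hti'
      have hsum : b.get (i : ℕ) + b.get (i' : ℕ) ∈ C j :=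
        hb (Hindman.FS.add_two b _ _ hlt)
      obtain ⟨T, _, hT⟩ := hFSa _ hsum.1
      have := congrArg (fun g => g t) hT
      simp only [Finsupp.add_apply, (hgetb i).1, (hgetb i').1, indFS_apply,
        if_pos hti, if_pos hti'] at this
      rcases em (t ∈ T) with h | h <;> simp [h] at this
    intro i i' hne
    rcases lt_trichotomy (i : ℕ) (i' : ℕ) with h | h | h
    · exact key _ _ h
    · exact absurd (Fin.ext h) hne
    · exact (key _ _ h).symm
  have hmono : ∀ I : Finset (Fin s), I.Nonempty → κ (I.biUnion β) = j := by
    intro I hI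
    have hsum : (∑ i ∈ I, b.get (i : ℕ)) ∈ C j := by
      have : (∑ i ∈ I, b.get (i : ℕ)) =
          ∑ n ∈ I.map Fin.valEmbedding, b.get n := by rw [Finset.sum_map]; rfl
      rw [this]
      exact hb (Hindman.FS.finset_sum b _ (hI.map))
    have hsupp : (∑ i ∈ I, b.get (i : ℕ)).support = I.biUnion β := by
      have h1 : (∑ i ∈ I, b.get (i : ℕ)) = IndFS (I.biUnion β) := by
        rw [IndFS, Finset.sum_biUnion]
        · exact Finset.sum_congr rfl fun i _ => by rw [(hgetb i).1, IndFS]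
        · intro i _ i' _ hne
          exact hdisj i i' hne
      rw [h1, indFS_support]
    rw [← hsupp]
    exact hsum.2
  -- bound
  set N : ℕ := (Finset.univ.sup fun i : Fin s => (β i).sup id) + 1 with hN
  have hbound : ∀ i : Fin s, ∀ t ∈ β i, t < N := by
    intro i t ht
    have h1 : t ≤ (β i).sup id := Finset.le_sup (f := id) ht
    have h2 : (β i).sup id ≤ Finset.univ.sup fun i : Fin s => (β i).sup id :=
      Finset.le_sup (f := fun i : Fin s => (β i).sup id) (Finset.mem_univ i)
    omega
  -- pick a large r on which the limit coloring agrees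
  have hW1 : (⋂ I : Finset (Fin s), {r | κbad r (I.biUnion β) = κ (I.biUnion β)}) ∈
      Filter.hyperfilter ℕ := Filter.iInter_mem.mpr fun I => hκ _
  have hW2 : {r : ℕ | N ≤ r} ∈ Filter.hyperfilter ℕ := by
    apply Filter.hyperfilter_le_cofinite
    rw [Filter.mem_cofinite]
    have : {r : ℕ | N ≤ r}ᶜ = Set.Iio N := by ext r; simp [Set.mem_Iio, not_le]
    rw [this]
    exact Set.finite_Iio N
  obtain ⟨r, hr1, hr2⟩ := Ultrafilter.nonempty_of_mem (Filter.inter_mem hW1 hW2)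
  simp only [Set.mem_iInter, Set.mem_setOf_eq] at hr1 hr2
  exact hbad r ⟨β, fun i => (hgetb i).2, fun i t ht => lt_of_lt_of_le (hbound i t ht) hr2,
    hdisj, j, fun I hI => by rw [hr1 I, hmono I hI]⟩

end Aux

/-- For any `s, k` there is `r` such that any `k`-coloring of any IP_r set in any abelian
group yields a monochromatic IP_s set. -/
theorem ipr_partition_regular (s k : ℕ) :
    ∃ r : ℕ, ∀ (G : Type*) [AddCommGroup G] (A : Set G) (c : A → Fin k),
      IsIPr r A →
        ∃ (x : Fin s → G) (hsub : FSfin x ⊆ A) (j : Fin k),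
          ∀ g : G, ∀ hg : g ∈ FSfin x, c ⟨g, hsub hg⟩ = j := by
  classical
  rcases Nat.eq_zero_or_pos k with hk | hk
  · -- no colors: the IP_r set must be empty, contradiction
    subst hk
    refine ⟨1, fun G _ A c hA => ?_⟩
    obtain ⟨x, hx⟩ := hA
    have hmem : x 0 ∈ FSfin x :=
      ⟨{0}, Finset.singleton_nonempty 0, Finset.sum_singleton _ _⟩
    exact (c ⟨x 0, hx hmem⟩).elim0
  obtain ⟨r, hr⟩ := exists_goodR s k hk
  refine ⟨r, fun G _ A c hA => ?_⟩
  obtain ⟨x, hx⟩ := hA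
  -- transfer x to a function on ℕ
  set f : ℕ → G := fun t => if h : t < r then x ⟨t, h⟩ else 0 with hf
  have key : ∀ S : Finset ℕ, S.Nonempty → (∀ t ∈ S, t < r) →
      (∑ t ∈ S, f t) ∈ FSfin x := by
    intro S hS hSr
    refine ⟨S.attach.map ⟨fun t => (⟨t.1, hSr t.1 t.2⟩ : Fin r),
      fun a b h => Subtype.ext (congrArg Fin.val h)⟩,
      (Finset.attach_nonempty_iff.mpr hS).map, ?_⟩
    rw [Finset.sum_map, ← Finset.sum_attach S (fun t => f t)]
    refine Finset.sum_congr rfl fun t _ => ?_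
    simp only [Function.Embedding.coeFn_mk, hf]
    rw [dif_pos (hSr t.1 t.2)]
    rfl
  -- the induced coloring of finite subsets of ℕ
  set κ : Finset ℕ → Fin k := fun S =>
    if h : (∑ t ∈ S, f t) ∈ A then c ⟨_, h⟩ else ⟨0, hk⟩ with hκ
  obtain ⟨β, hβne, hβr, hβdisj, j, hmono⟩ := hr κ
  set y : Fin s → G := fun i => ∑ t ∈ β i, f t with hy
  have hsum : ∀ I : Finset (Fin s), (∑ i ∈ I, y i) = ∑ t ∈ I.biUnion β, f t := by
    intro I
    rw [Finset.sum_biUnion (fun i _ i' _ hne => hβdisj i i' hne)]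
  have hbUne : ∀ I : Finset (Fin s), I.Nonempty → (I.biUnion β).Nonempty := by
    rintro I ⟨i, hi⟩
    obtain ⟨t, ht⟩ := hβne i
    exact ⟨t, Finset.mem_biUnion.mpr ⟨i, hi, ht⟩⟩
  have hbUr : ∀ I : Finset (Fin s), ∀ t ∈ I.biUnion β, t < r := by
    intro I t ht
    obtain ⟨i, _, hti⟩ := Finset.mem_biUnion.mp ht
    exact hβr i t hti
  have hsub : FSfin y ⊆ FSfin x := by
    rintro g ⟨I, hI, rfl⟩
    rw [hsum]
    exact key _ (hbUne I hI) (hbUr I)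
  refine ⟨y, fun g hg => hx (hsub hg), j, ?_⟩
  intro g hg
  obtain ⟨I, hI, hgI⟩ := id hg
  have hmem : (∑ t ∈ I.biUnion β, f t) ∈ A :=
    hx (key _ (hbUne I hI) (hbUr I))
  have hc : κ (I.biUnion β) = c ⟨∑ t ∈ I.biUnion β, f t, hmem⟩ := by
    rw [hκ]; simp only [dif_pos hmem]
  have hval : g = ∑ t ∈ I.biUnion β, f t := by rw [← hgI]; exact hsum I
  have heq : (⟨g, hx (hsub hg)⟩ : A) = ⟨∑ t ∈ I.biUnion β, f t, hmem⟩ :=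
    Subtype.ext hval
  show c ⟨g, hx (hsub hg)⟩ = j
  rw [heq, ← hc, hmono I hI]
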